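/- Let N be a positive integer and let F : ℝ → ℝ be the trigonometric polynomial F(t) = Σ_{n=1}^{N} A_n·cos(2πnt + θ_n) with real amplitudes A_n and phases θ_n (so F has period 1 and zero mean). For each positive integer k define s_k(t) = (1/k)·Σ_{m=0}^{k−1} F(t − m/k). Then s_k = 0 identically for all k > N, and for every n with 1 ≤ n ≤ N and every t ∈ ℝ, A_n·cos(2πnt + θ_n) = Σ_{k=1}^{∞} μ(k)·s_{k·n}(t) = Σ_{k=1}^{∞} (μ(k)/(k·n))·Σ_{m=0}^{k·n−1} F(t − m/(k·n)), where all but finitely many terms of the series vanish. -/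

import Mathlib

open Filter ArithmeticFunction Real

private lemma aft_exp_root_sum (k n : ℕ) (hk : 0 < k) :
    ∑ m ∈ Finset.range k, Complex.exp ((-(2 * π * n * m / k) : ℝ) * Complex.I)
      = if k ∣ n then (k : ℂ) else 0 := by
  have hk0 : (k : ℝ) ≠ 0 := Nat.cast_ne_zero.mpr hk.ne'
  have hk0c : (k : ℂ) ≠ 0 := Nat.cast_ne_zero.mpr hk.ne'
  have hterm : ∀ m : ℕ, Complex.exp ((-(2 * π * n * m / k) : ℝ) * Complex.I)
      = Complex.exp ((-(2 * π * n / k) : ℝ) * Complex.I) ^ m := by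
    intro m
    rw [← Complex.exp_nat_mul]
    congr 1
    push_cast
    ring
  rw [Finset.sum_congr rfl fun m _ => hterm m]
  by_cases h : k ∣ n
  · obtain ⟨c, hc⟩ := h
    have h1 : Complex.exp ((-(2 * π * n / k) : ℝ) * Complex.I) = 1 := by
      have harg : ((-(2 * π * n / k) : ℝ) : ℂ) * Complex.I = (-c : ℤ) * (2 * π * Complex.I) := by
        have : (n : ℝ) = k * c := by exact_mod_cast hc
        push_cast [this]
        field_simp [hk0c]
      rw [harg, Complex.exp_int_mul_two_pi_mul_I]
    rw [h1]
    simp [hc]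
  · have hne : Complex.exp ((-(2 * π * n / k) : ℝ) * Complex.I) ≠ 1 := by
      intro hone
      rw [Complex.exp_eq_one_iff] at hone
      obtain ⟨z, hz⟩ := hone
      apply h
      have h2 : ((-(2 * π * n / k) : ℝ) : ℂ) = ((z * (2 * π) : ℝ) : ℂ) :=
        mul_right_cancel₀ Complex.I_ne_zero (by rw [hz]; push_cast; ring)
      have h3 : (-(2 * π * n / k) : ℝ) = z * (2 * π) := Complex.ofReal_inj.mp h2
      have h4 : (n : ℝ) = (-z : ℤ) * k := by
        have hpi : (2 * π : ℝ) ≠ 0 := by positivity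
        field_simp at h3
        have h3' : (2 * π) * (-(n : ℝ)) = (2 * π) * ((z : ℝ) * k) := by linear_combination (2 * π) * h3
        have h5 := mul_left_cancel₀ hpi h3'
        push_cast
        linarith
      have h5 : (n : ℤ) = -z * k := by exact_mod_cast h4
      exact Int.natCast_dvd_natCast.mp ⟨-z, by exact_mod_cast h5.trans (by ring)⟩
    rw [geom_sum_eq hne]
    have hpow : Complex.exp ((-(2 * π * n / k) : ℝ) * Complex.I) ^ k = 1 := by
      rw [← Complex.exp_nat_mul]
      have : (k : ℂ) * (((-(2 * π * n / k) : ℝ) : ℂ) * Complex.I) = (-n : ℤ) * (2 * π * Complex.I) := by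
        push_cast
        field_simp [hk0c]
      rw [this, Complex.exp_int_mul_two_pi_mul_I]
    rw [hpow]
    simp [h]

private lemma aft_cos_shift_sum (k n : ℕ) (hk : 0 < k) (x : ℝ) :
    ∑ m ∈ Finset.range k, Real.cos (x - 2 * π * n * m / k)
      = if k ∣ n then k * Real.cos x else 0 := by
  have key : ∑ m ∈ Finset.range k, Real.cos (x - 2 * π * n * m / k)
      = (Complex.exp ((x : ℝ) * Complex.I) *
          ∑ m ∈ Finset.range k, Complex.exp ((-(2 * π * n * m / k) : ℝ) * Complex.I)).re := by
    rw [Finset.mul_sum, Complex.re_sum]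
    apply Finset.sum_congr rfl
    intro m _
    rw [← Complex.exp_add]
    have : ((x : ℝ) : ℂ) * Complex.I + ((-(2 * π * n * m / k) : ℝ) : ℂ) * Complex.I
        = ((x - 2 * π * n * m / k : ℝ) : ℂ) * Complex.I := by push_cast; ring
    rw [this, Complex.exp_ofReal_mul_I_re]
  rw [key, aft_exp_root_sum k n hk]
  by_cases h : k ∣ n
  · simp only [h, if_true]
    rw [show Complex.exp ((x:ℝ) * Complex.I) * (k : ℂ) = (k:ℝ) * Complex.exp ((x:ℝ) * Complex.I) by push_cast; ring]
    rw [Complex.re_ofReal_mul, Complex.exp_ofReal_mul_I_re]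
  · simp [h]

private lemma aft_moebius_divisor_sum (m : ℕ) :
    ∑ d ∈ m.divisors, (moebius d : ℝ) = if m = 1 then 1 else 0 := by
  have h := congrFun (congrArg (↑· : ArithmeticFunction ℤ → ℕ → ℤ) moebius_mul_coe_zeta) m
  simp only [coe_mul_zeta_apply, one_apply] at h
  have h2 : ((∑ d ∈ m.divisors, moebius d : ℤ) : ℝ) = (((if m = 1 then 1 else 0 : ℤ)) : ℝ) := by
    rw [h]
  push_cast at h2
  rw [h2]

theorem AFT_signal_processing
    (N : ℕ) (hN : 1 ≤ N) (A θ : ℕ → ℝ) (F : ℝ → ℝ)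
    (hF : ∀ t : ℝ, F t = ∑ n ∈ Finset.Icc 1 N, A n * Real.cos (2 * π * n * t + θ n))
    (s : ℕ → ℝ → ℝ)
    (hs : ∀ k : ℕ, 1 ≤ k → ∀ t : ℝ,
      s k t = (1 / (k : ℝ)) * ∑ m ∈ Finset.range k, F (t - (m : ℝ) / k)) :
    (∀ k : ℕ, N < k → ∀ t : ℝ, s k t = 0) ∧
    ∀ n : ℕ, 1 ≤ n → n ≤ N → ∀ t : ℝ,
      (∀ k : ℕ, 1 ≤ k → N < k * n → (moebius k : ℝ) * s (k * n) t = 0) ∧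
      HasSum (fun k : ℕ => (moebius (k + 1) : ℝ) * s ((k + 1) * n) t)
        (A n * Real.cos (2 * π * n * t + θ n)) ∧
      HasSum (fun k : ℕ => ((moebius (k + 1) : ℝ) / ((k + 1) * n)) *
          ∑ m ∈ Finset.range ((k + 1) * n), F (t - (m : ℝ) / ((k + 1) * n)))
        (A n * Real.cos (2 * π * n * t + θ n)) := by
  -- structural formula for s
  have hs_eq : ∀ k : ℕ, 1 ≤ k → ∀ t : ℝ,
      s k t = ∑ d ∈ (Finset.Icc 1 N).filter (fun d => k ∣ d),
        A d * Real.cos (2 * π * d * t + θ d) := by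
    intro k hk t
    have hk0 : (k : ℝ) ≠ 0 := Nat.cast_ne_zero.mpr (by omega)
    rw [hs k hk t]
    have step1 : ∀ m ∈ Finset.range k, F (t - (m : ℝ) / k)
        = ∑ d ∈ Finset.Icc 1 N, A d * Real.cos ((2 * π * d * t + θ d) - 2 * π * d * m / k) := by
      intro m _
      rw [hF]
      apply Finset.sum_congr rfl
      intro d _
      congr 1
      field_simp
      ring
    rw [Finset.sum_congr rfl step1, Finset.sum_comm]
    have step2 : ∀ d ∈ Finset.Icc 1 N,
        ∑ m ∈ Finset.range k, A d * Real.cos ((2 * π * d * t + θ d) - 2 * π * d * m / k)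
        = A d * (if k ∣ d then k * Real.cos (2 * π * d * t + θ d) else 0) := by
      intro d _
      rw [← Finset.mul_sum, aft_cos_shift_sum k d (by omega)]
    rw [Finset.sum_congr rfl step2, Finset.sum_filter, Finset.mul_sum]
    apply Finset.sum_congr rfl
    intro d _
    by_cases h : k ∣ d <;> simp [h] <;> field_simp <;> ring
  have part1 : ∀ k : ℕ, N < k → ∀ t : ℝ, s k t = 0 := by
    intro k hkN t
    rw [hs_eq k (by omega) t]
    apply Finset.sum_eq_zero
    intro d hd
    simp only [Finset.mem_filter, Finset.mem_Icc] at hd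
    have := Nat.le_of_dvd (by omega) hd.2
    omega
  refine ⟨part1, fun n hn1 hnN t => ?_⟩
  have hvan : ∀ k : ℕ, 1 ≤ k → N < k * n → (moebius k : ℝ) * s (k * n) t = 0 := by
    intro k hk hkn
    rw [part1 (k * n) hkn t, mul_zero]
  -- the finite sum identity
  have key : ∀ d ∈ Finset.Icc 1 N,
      (∑ k ∈ Finset.range N, if (k + 1) * n ∣ d then (moebius (k + 1) : ℝ) else 0)
        = if d = n then 1 else 0 := by
    intro d hd
    rw [Finset.mem_Icc] at hd
    by_cases hnd : n ∣ d
    · obtain ⟨e, he⟩ := hnd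
      have he1 : 1 ≤ e := Nat.pos_of_ne_zero (by rintro rfl; simp at he; omega)
      have heN : e ≤ N :=
        le_trans (le_trans (Nat.le_mul_of_pos_left e (by omega : 0 < n)) (le_of_eq he.symm)) hd.2
      have trans1 : (∑ k ∈ Finset.range N, if (k + 1) * n ∣ d then (moebius (k + 1) : ℝ) else 0)
          = ∑ j ∈ e.divisors, (moebius j : ℝ) := by
        have hcond : ∀ k : ℕ, ((k + 1) * n ∣ d) ↔ ((k + 1) ∣ e) := by
          intro k
          rw [he, mul_comm (k + 1) n]
          exact Nat.mul_dvd_mul_iff_left (by omega : 0 < n)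
        simp only [hcond]
        rw [← Finset.sum_filter]
        apply Finset.sum_nbij' (fun k => k + 1) (fun j => j - 1)
        · intro k hk
          simp only [Finset.mem_filter, Finset.mem_range] at hk
          exact Nat.mem_divisors.mpr ⟨hk.2, by omega⟩
        · intro j hj
          rw [Nat.mem_divisors] at hj
          have hj1 : 1 ≤ j := Nat.pos_of_dvd_of_pos hj.1 (by omega)
          have hjN : j ≤ N := le_trans (Nat.le_of_dvd (by omega) hj.1) heN
          simp only [Finset.mem_filter, Finset.mem_range]
          constructor
          · omega
          · rw [Nat.sub_add_cancel hj1]; exact hj.1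
        · intro k _; omega
        · intro j hj
          rw [Nat.mem_divisors] at hj
          have hj1 : 1 ≤ j := Nat.pos_of_dvd_of_pos hj.1 (by omega)
          omega
        · intro k _; rfl
      rw [trans1, aft_moebius_divisor_sum]
      have hiff : (e = 1) ↔ (d = n) := by
        constructor
        · rintro rfl; simpa using he
        · intro hdn
          have h2 : n * 1 = n * e := by
            rw [mul_one]
            conv_lhs => rw [← hdn]
            exact he
          exact (Nat.eq_of_mul_eq_mul_left (by omega : 0 < n) h2).symm
      exact if_congr hiff rfl rfl
    · have hdnn : d ≠ n := fun h => hnd (h ▸ dvd_refl n)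
      rw [if_neg hdnn]
      apply Finset.sum_eq_zero
      intro k _
      rw [if_neg]
      intro hdvd
      exact hnd (dvd_trans (dvd_mul_left n (k + 1)) hdvd)
  -- finite-sum evaluation
  have hsum : ∑ k ∈ Finset.range N, (moebius (k + 1) : ℝ) * s ((k + 1) * n) t
      = A n * Real.cos (2 * π * n * t + θ n) := by
    have e1 : ∀ k ∈ Finset.range N, (moebius (k + 1) : ℝ) * s ((k + 1) * n) t
        = ∑ d ∈ Finset.Icc 1 N, (if (k + 1) * n ∣ d then (moebius (k + 1) : ℝ) else 0)
            * (A d * Real.cos (2 * π * d * t + θ d)) := by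
      intro k _
      rw [hs_eq ((k + 1) * n) (Nat.mul_pos (Nat.succ_pos k) (by omega : 0 < n)) t, Finset.sum_filter, Finset.mul_sum]
      apply Finset.sum_congr rfl
      intro d _
      by_cases h : (k + 1) * n ∣ d <;> simp [h]
    rw [Finset.sum_congr rfl e1, Finset.sum_comm]
    have e2 : ∀ d ∈ Finset.Icc 1 N,
        ∑ k ∈ Finset.range N, (if (k + 1) * n ∣ d then (moebius (k + 1) : ℝ) else 0)
            * (A d * Real.cos (2 * π * d * t + θ d))
        = (if d = n then 1 else 0) * (A d * Real.cos (2 * π * d * t + θ d)) := by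
      intro d hd
      rw [← Finset.sum_mul, key d hd]
    rw [Finset.sum_congr rfl e2]
    have hmem : n ∈ Finset.Icc 1 N := Finset.mem_Icc.mpr ⟨hn1, hnN⟩
    simp only [ite_mul, one_mul, zero_mul]
    rw [Finset.sum_ite_eq' (Finset.Icc 1 N) n
      (fun d => A d * Real.cos (2 * π * d * t + θ d)), if_pos hmem]
  have hzero : ∀ k : ℕ, k ∉ Finset.range N → (moebius (k + 1) : ℝ) * s ((k + 1) * n) t = 0 := by
    intro k hk
    rw [Finset.mem_range, not_lt] at hk
    apply hvan (k + 1) (by omega)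
    calc N < k + 1 := by omega
    _ ≤ (k + 1) * n := Nat.le_mul_of_pos_right _ (by omega)
  have hsum1 : HasSum (fun k : ℕ => (moebius (k + 1) : ℝ) * s ((k + 1) * n) t)
      (A n * Real.cos (2 * π * n * t + θ n)) := by
    rw [← hsum]
    exact hasSum_sum_of_ne_finset_zero hzero
  refine ⟨hvan, hsum1, ?_⟩
  convert hsum1 using 1
  funext k
  rw [hs ((k + 1) * n) (Nat.mul_pos (Nat.succ_pos k) (by omega : 0 < n)) t]
  push_cast
  ring
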